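/- For a Pólya urn started with b black and w white balls, the conditional distribution of the draws given Z = p is that of i.i.d. Bernoulli(p) draws: for any 0-1 sequence (ε_1,…,ε_n) with k ones, P(draws = (ε_1,…,ε_n)) = ∫_0^1 p^k (1-p)^{n-k} Beta_{b,w}(p) dp. -/

import Mathlib

open MeasureTheory ProbabilityTheory Filter

/-- The density of the Beta(b,w) distribution. -/
noncomputable def betaDensity (b w : ℕ) (p : ℝ) : ℝ :=
  Real.Gamma (b + w) / (Real.Gamma b * Real.Gamma w) * p ^ (b - 1) * (1 - p) ^ (w - 1)

/-- The CDF of the Beta(b,w) distribution. -/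
noncomputable def betaCDF (b w : ℕ) (x : ℝ) : ℝ :=
  ∫ p in Set.Ioo (0 : ℝ) x, betaDensity b w p

/-- The event that the first draws are exactly the sequence `ε` (`true` = black). -/
def drawsEq {Ω : Type*} (X : ℕ → Ω → Bool) (ε : List Bool) : Set Ω :=
  {ω | List.ofFn (fun i : Fin ε.length => X (i : ℕ) ω) = ε}

/-- `X` is the draw process of a Pólya urn started with `b` black and `w` white balls:
given any history `ε` of draws, the next ball drawn is black with probability
(current number of black balls)/(current total number of balls). -/
def IsPolyaUrn {Ω : Type*} [MeasurableSpace Ω] (P : Measure Ω)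
    (X : ℕ → Ω → Bool) (b w : ℕ) : Prop :=
  (∀ i, Measurable (X i)) ∧
  ∀ ε : List Bool,
    P (drawsEq X (ε ++ [true])) =
      ENNReal.ofReal (((b : ℝ) + ε.count true) / ((b : ℝ) + w + ε.length)) *
        P (drawsEq X ε)

/-- Number of black balls in the urn after `n` draws. -/
def blackCount {Ω : Type*} (X : ℕ → Ω → Bool) (b n : ℕ) (ω : Ω) : ℕ :=
  b + ((Finset.range n).filter fun i => X i ω = true).card

/-- Number of white balls in the urn after `n` draws. -/
def whiteCount {Ω : Type*} (X : ℕ → Ω → Bool) (w n : ℕ) (ω : Ω) : ℕ :=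
  w + ((Finset.range n).filter fun i => X i ω = false).card

/-!  Auxiliary lemmas -/

lemma fact_prod (a c : ℕ) :
    a.factorial * ∏ j ∈ Finset.range (c+1), (a+1+j) = (a+c+1).factorial := by
  induction c with
  | zero => simp [Nat.factorial_succ, Nat.mul_comm]
  | succ c ih =>
      rw [Finset.prod_range_succ, ← Nat.mul_assoc, ih,
        show a + (c+1) + 1 = (a+c+1) + 1 from by omega, Nat.factorial_succ,
        show a + 1 + (c+1) = a+c+1+1 from by omega]
      exact Nat.mul_comm _ _

lemma integral_pow_one_sub_pow (a c : ℕ) :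
    ∫ x in Set.Ioo (0:ℝ) 1, x^a * (1-x)^c
      = (a.factorial * c.factorial : ℝ) / ((a+c+1).factorial) := by
  have h0 : (∫ x in Set.Ioo (0:ℝ) 1, x^a * (1-x)^c)
      = ∫ x in (0:ℝ)..1, x^a * (1-x)^c := by
    rw [intervalIntegral.integral_of_le (by norm_num), integral_Ioc_eq_integral_Ioo]
  have hu : 0 < Complex.re ((a:ℂ)+1) := by simp; positivity
  have hβ := Complex.betaIntegral_eval_nat_add_one_right hu c
  rw [Complex.betaIntegral] at hβ
  have hint : (∫ x in (0:ℝ)..1, (x:ℂ)^(((a:ℂ)+1)-1) * ((1:ℂ)-x)^(((c:ℂ)+1)-1))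
      = ((∫ x in (0:ℝ)..1, x^a * (1-x)^c : ℝ) : ℂ) := by
    rw [← intervalIntegral.integral_ofReal]
    apply intervalIntegral.integral_congr
    intro x _
    simp only [add_sub_cancel_right, Complex.cpow_natCast]
    push_cast
    ring
  have h2 : (∏ j ∈ Finset.range (c+1), ((a:ℝ)+1+j))
      = ((a+c+1).factorial : ℝ) / (a.factorial : ℝ) := by
    rw [eq_div_iff (by positivity), mul_comm]
    exact_mod_cast fact_prod a c
  have hprod : (∏ j ∈ Finset.range (c+1), ((a:ℂ)+1+j))
      = ((((a+c+1).factorial : ℝ) / (a.factorial : ℝ) : ℝ) : ℂ) := by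
    rw [← h2]
    push_cast
    ring
  rw [hint, hprod] at hβ
  have : ((∫ x in (0:ℝ)..1, x^a * (1-x)^c : ℝ) : ℂ)
      = (((c.factorial : ℝ) / (((a+c+1).factorial : ℝ) / (a.factorial : ℝ)) : ℝ) : ℂ) := by
    rw [hβ]; push_cast; ring
  have hre := Complex.ofReal_injective this
  rw [h0, hre, div_div_eq_mul_div]
  ring

/-- closed form for the Pólya probability with `k` black and `m` white draws. -/
noncomputable def polyaF (b' w' k m : ℕ) : ℝ :=
  ((b'+w'+1).factorial * (k+b').factorial * (m+w').factorial : ℝ) /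
    (b'.factorial * w'.factorial * (k+m+b'+w'+1).factorial)

lemma polyaF_nonneg (b' w' k m : ℕ) : 0 ≤ polyaF b' w' k m := by
  unfold polyaF; positivity

lemma fact_cast_succ (n : ℕ) : ((n+1).factorial : ℝ) = ((n:ℝ)+1) * (n.factorial : ℝ) := by
  rw [Nat.factorial_succ]; push_cast; ring

lemma polyaF_true (b' w' k m : ℕ) :
    (((b':ℝ)+1+k) / (((b':ℝ)+1)+((w':ℝ)+1)+((k:ℝ)+m))) * polyaF b' w' k m
      = polyaF b' w' (k+1) m := by
  unfold polyaF
  have e1 : ((k+1+b').factorial : ℝ) = (((k+b' : ℕ):ℝ) + 1) * ((k+b').factorial : ℝ) := by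
    rw [show k+1+b' = (k+b')+1 from by omega, fact_cast_succ]
  have e2 : ((k+1+m+b'+w'+1).factorial : ℝ)
      = (((k+m+b'+w'+1 : ℕ):ℝ) + 1) * ((k+m+b'+w'+1).factorial : ℝ) := by
    rw [show k+1+m+b'+w'+1 = (k+m+b'+w'+1)+1 from by omega, fact_cast_succ]
  rw [e1, e2]
  field_simp
  push_cast
  ring

lemma polyaF_sum (b' w' k m : ℕ) :
    polyaF b' w' k m = polyaF b' w' (k+1) m + polyaF b' w' k (m+1) := by
  unfold polyaF
  have e1 : ((k+1+b').factorial : ℝ) = (((k+b' : ℕ):ℝ) + 1) * ((k+b').factorial : ℝ) := by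
    rw [show k+1+b' = (k+b')+1 from by omega, fact_cast_succ]
  have e2 : ((k+1+m+b'+w'+1).factorial : ℝ)
      = (((k+m+b'+w'+1 : ℕ):ℝ) + 1) * ((k+m+b'+w'+1).factorial : ℝ) := by
    rw [show k+1+m+b'+w'+1 = (k+m+b'+w'+1)+1 from by omega, fact_cast_succ]
  have e3 : ((m+1+w').factorial : ℝ) = (((m+w' : ℕ):ℝ) + 1) * ((m+w').factorial : ℝ) := by
    rw [show m+1+w' = (m+w')+1 from by omega, fact_cast_succ]
  have e4 : ((k+(m+1)+b'+w'+1).factorial : ℝ)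
      = (((k+m+b'+w'+1 : ℕ):ℝ) + 1) * ((k+m+b'+w'+1).factorial : ℝ) := by
    rw [show k+(m+1)+b'+w'+1 = (k+m+b'+w'+1)+1 from by omega, fact_cast_succ]
  rw [e1, e2, e3, e4]
  field_simp
  push_cast
  ring

lemma betaInt (b' w' k m : ℕ) :
    ∫ p in Set.Ioo (0:ℝ) 1, p^k * (1-p)^m * betaDensity (b'+1) (w'+1) p
      = polyaF b' w' k m := by
  have hΓ : Real.Gamma ((b'+1 : ℕ) : ℝ) = (b'.factorial : ℝ) := by
    exact_mod_cast Real.Gamma_nat_eq_factorial b'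
  have hΓ' : Real.Gamma ((w'+1 : ℕ) : ℝ) = (w'.factorial : ℝ) := by
    exact_mod_cast Real.Gamma_nat_eq_factorial w'
  have hΓ2 : Real.Gamma (((b'+1 : ℕ) : ℝ) + ((w'+1 : ℕ) : ℝ))
      = ((b'+w'+1).factorial : ℝ) := by
    rw [show (((b'+1 : ℕ) : ℝ) + ((w'+1 : ℕ) : ℝ)) = (((b'+w'+1 : ℕ) : ℝ) + 1) by push_cast; ring]
    exact_mod_cast Real.Gamma_nat_eq_factorial (b'+w'+1)
  have hC : ∀ p : ℝ, p^k * (1-p)^m * betaDensity (b'+1) (w'+1) p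
      = (((b'+w'+1).factorial : ℝ) / (b'.factorial * w'.factorial))
        * (p^(k+b') * (1-p)^(m+w')) := by
    intro p
    unfold betaDensity
    rw [hΓ, hΓ', hΓ2, Nat.add_sub_cancel, Nat.add_sub_cancel, pow_add, pow_add]
    ring
  simp_rw [hC]
  rw [MeasureTheory.integral_const_mul, integral_pow_one_sub_pow,
    show k+b'+(m+w')+1 = k+m+b'+w'+1 from by omega]
  unfold polyaF
  push_cast
  ring

lemma mem_drawsEq_iff {Ω : Type*} (X : ℕ → Ω → Bool) (ε : List Bool) (ω : Ω) :
    ω ∈ drawsEq X ε ↔ ∀ (i : ℕ) (h : i < ε.length), X i ω = ε[i] := by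
  simp only [drawsEq, Set.mem_setOf_eq, List.ext_get_iff, List.length_ofFn, List.get_eq_getElem,
    List.getElem_ofFn, true_and]
  constructor
  · intro h i hi
    exact h i hi hi
  · intro h i hi hi'
    exact h i hi

lemma measurableSet_drawsEq {Ω : Type*} [MeasurableSpace Ω] (X : ℕ → Ω → Bool)
    (hX : ∀ i, Measurable (X i)) (ε : List Bool) : MeasurableSet (drawsEq X ε) := by
  have : drawsEq X ε = ⋂ i : Fin ε.length, X i ⁻¹' {ε[(i:ℕ)]} := by
    ext ω
    simp only [mem_drawsEq_iff, Set.mem_iInter, Set.mem_preimage, Set.mem_singleton_iff]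
    exact ⟨fun h i => h i i.2, fun h i hi => h ⟨i, hi⟩⟩
  rw [this]
  exact MeasurableSet.iInter fun i => (hX i) (measurableSet_singleton _)

lemma drawsEq_concat {Ω : Type*} (X : ℕ → Ω → Bool) (ε : List Bool) (c : Bool) :
    drawsEq X (ε ++ [c]) = drawsEq X ε ∩ X ε.length ⁻¹' {c} := by
  ext ω
  simp only [mem_drawsEq_iff, Set.mem_inter_iff, Set.mem_preimage, Set.mem_singleton_iff,
    List.length_append, List.length_singleton]
  constructor
  · intro h
    refine ⟨fun i hi => ?_, ?_⟩
    · have := h i (by omega)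
      rwa [List.getElem_append_left hi] at this
    · have := h ε.length (by omega)
      rwa [List.getElem_concat_length (l := ε) (a := c) rfl] at this
  · rintro ⟨h1, h2⟩ i hi
    rcases lt_or_eq_of_le (Nat.lt_succ_iff.mp hi) with hi' | hi'
    · rw [List.getElem_append_left hi']
      exact h1 i hi'
    · subst hi'
      rw [List.getElem_concat_length (l := ε) (a := c) rfl]
      exact h2

lemma count_false_eq (ε : List Bool) : ε.count false = ε.length - ε.count true := by
  induction ε with
  | nil => simp
  | cons a l ih =>
      have hle : l.count true ≤ l.length := List.count_le_length
      cases a <;> simp [List.count_cons, ih] <;> omega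

/-- De Finetti representation of the Pólya urn: the probability of a draw sequence `ε`
with `k` black draws is a Beta(b,w)-mixture of Bernoulli product probabilities. -/
theorem polya_deFinetti {Ω : Type*} [MeasurableSpace Ω] (P : Measure Ω)
    [IsProbabilityMeasure P] (X : ℕ → Ω → Bool) (b w : ℕ)
    (hb : 1 ≤ b) (hw : 1 ≤ w) (hX : IsPolyaUrn P X b w) (ε : List Bool) :
    P (drawsEq X ε) =
      ENNReal.ofReal (∫ p in Set.Ioo (0 : ℝ) 1,
        p ^ ε.count true * (1 - p) ^ (ε.length - ε.count true) * betaDensity b w p) := by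
  obtain ⟨b', rfl⟩ : ∃ b', b = b' + 1 := ⟨b - 1, by omega⟩
  obtain ⟨w', rfl⟩ : ∃ w', w = w' + 1 := ⟨w - 1, by omega⟩
  have hmeas := hX.1
  have key : ∀ δ : List Bool,
      P (drawsEq X δ) = ENNReal.ofReal (polyaF b' w' (δ.count true) (δ.count false)) := by
    intro δ
    induction δ using List.reverseRecOn with
    | nil =>
        have h1 : drawsEq X ([] : List Bool) = Set.univ := by
          ext ω; simp [drawsEq]
        rw [h1, measure_univ]
        unfold polyaF
        rw [ENNReal.ofReal_eq_one.mpr]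
        simp only [List.count_nil, Nat.zero_add]
        rw [div_eq_one_iff_eq (by positivity)]
        push_cast
        ring
    | append_singleton ε c ih =>
        set k := ε.count true with hk
        set m := ε.count false with hm
        have hkm : k + m = ε.length := by
          rw [hk, hm, count_false_eq]
          have := List.count_le_length (a := true) (l := ε)
          omega
        have htrue : P (drawsEq X (ε ++ [true]))
            = ENNReal.ofReal (polyaF b' w' (k+1) m) := by
          rw [hX.2 ε, ih, ← ENNReal.ofReal_mul (by positivity)]
          congr 1
          rw [← hk, ← hkm, ← polyaF_true b' w' k m]
          push_cast
          ring
        cases c with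
        | true =>
            have c1 : (ε ++ [true]).count true = k+1 := by
              rw [hk]; simp
            have c2 : (ε ++ [true]).count false = m := by
              rw [hm]; simp
            rw [c1, c2, htrue]
        | false =>
            have hsplit : P (drawsEq X ε)
                = P (drawsEq X (ε ++ [true])) + P (drawsEq X (ε ++ [false])) := by
              rw [drawsEq_concat, drawsEq_concat]
              rw [← measure_union]
              · congr 1
                ext ω
                simp only [Set.mem_union, Set.mem_inter_iff, Set.mem_preimage,
                  Set.mem_singleton_iff]
                cases h : X ε.length ω <;> tauto
              · apply Set.disjoint_left.mpr
                rintro ω ⟨-, h1⟩ ⟨-, h2⟩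
                simp only [Set.mem_preimage, Set.mem_singleton_iff] at h1 h2
                rw [h1] at h2; exact Bool.noConfusion h2
              · exact (measurableSet_drawsEq X hmeas ε).inter
                  ((hmeas ε.length) (measurableSet_singleton _))
            have hFsum := polyaF_sum b' w' k m
            have hfalse : P (drawsEq X (ε ++ [false]))
                = ENNReal.ofReal (polyaF b' w' k (m+1)) := by
              have := hsplit
              rw [ih, htrue, hFsum, ENNReal.ofReal_add (polyaF_nonneg _ _ _ _)
                (polyaF_nonneg _ _ _ _)] at this
              exact (ENNReal.add_right_inj ENNReal.ofReal_ne_top).mp this.symm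
            have c1 : (ε ++ [false]).count true = k := by
              rw [hk]; simp
            have c2 : (ε ++ [false]).count false = m+1 := by
              rw [hm]; simp
            rw [c1, c2, hfalse]
  rw [key ε, betaInt b' w' (ε.count true) (ε.length - ε.count true), ← count_false_eq]
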